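/- Let G and H be connected graphs, where H has at least ⌈n(G)/3 + 2⌉ vertices and a universal vertex, and let v ∈ V(G). Then γ_t(G_v∗H) ≤ a(G_v∗H) + 1, where G_v∗H is the universally-identifying graph of G and H at v. -/

import Mathlib

open SimpleGraph

/-- The total domination number of a graph. -/
noncomputable def totalDominationNumber {V : Type*} (G : SimpleGraph V) : ℕ :=
  sInf {k | ∃ D : Finset V, (∀ v : V, ∃ u ∈ D, G.Adj v u) ∧ D.card = k}

/-- The annihilation number of a graph. -/
noncomputable def annihilationNumber {V : Type*} (G : SimpleGraph V) : ℕ :=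
  sSup {k | ∃ S : Finset V, S.card = k ∧ ∑ v ∈ S, (G.neighborSet v).ncard ≤ G.edgeSet.ncard}

/-- The universally-identifying graph `G_v ∗ H`: given `v ∈ V(G)` and a graph `H` with
a universal vertex `h`, identify the vertex `v` of `G` with the vertex `h` of `H`.
The vertices are those of `G` together with the vertices of `H` other than `h`;
the identified vertex is `Sum.inl v`. -/
def uidGraph {V W : Type*} (G : SimpleGraph V) (v : V) (H : SimpleGraph W) (h : W) :
    SimpleGraph (V ⊕ {w : W // w ≠ h}) :=
  SimpleGraph.fromRel (fun a b =>
    (∃ x y, G.Adj x y ∧ a = Sum.inl x ∧ b = Sum.inl y) ∨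
    (∃ (x y : {w : W // w ≠ h}), H.Adj x y ∧ a = Sum.inr x ∧ b = Sum.inr y) ∨
    (∃ (y : {w : W // w ≠ h}), H.Adj h y ∧ a = Sum.inl v ∧ b = Sum.inr y))


section Aux
open Finset

lemma tree_lemma {V : Type*} [DecidableEq V] (v : V) (par : V → V) (dep : V → ℕ)
    (hv : dep v = 0)
    (hdep : ∀ x, x ≠ v → dep (par x) + 1 = dep x) :
    ∀ A : Finset V, v ∈ A → (∀ x ∈ A, x ≠ v → par x ∈ A) →
    ∃ S : Finset V, S ⊆ A ∧ v ∈ S ∧ 3 * S.card ≤ 2 * A.card + 1 ∧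
      ∀ x ∈ A, x ≠ v → (par x ∈ S ∨ ∃ s ∈ S, s ≠ v ∧ par s = x) := by
  classical
  have hzero : ∀ x, dep x = 0 → x = v := by
    intro x hx
    by_contra hxv
    have := hdep x hxv; omega
  intro A
  induction A using Finset.strongInduction with
  | _ A ih =>
    intro hvA hcl
    obtain ⟨u, huA, humax⟩ := Finset.exists_max_image A dep ⟨v, hvA⟩
    by_cases hd : dep u ≤ 2
    · -- base case
      set C := A.filter (fun x => x ≠ v ∧ par x = v ∧ ∃ s ∈ A, s ≠ v ∧ par s = x) with hC
      have hvC : v ∉ C := by simp [hC]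
      refine ⟨insert v C, insert_subset hvA (filter_subset _ _), mem_insert_self _ _, ?_, ?_⟩
      · rw [card_insert_of_notMem hvC]
        set D := A.filter (fun s => s ≠ v ∧ par s ∈ C) with hD
        have hCD : C.card ≤ D.card := by
          have h1 : C ⊆ D.image par := by
            intro c hc
            have hc' := hc
            simp only [hC, mem_filter] at hc'
            obtain ⟨hcA, hcv, hcpar, s, hsA, hsv, hspar⟩ := hc'
            exact mem_image.mpr ⟨s, mem_filter.mpr ⟨hsA, hsv, hspar ▸ hc⟩, hspar⟩
          exact (card_le_card h1).trans card_image_le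
        have hdisj : Disjoint C D := by
          rw [Finset.disjoint_left]
          intro c hcC hcD
          have h1 := (mem_filter.mp hcC).2.2.1
          have h2 := (mem_filter.mp hcD).2.2
          rw [h1] at h2
          exact hvC h2
        have hvD : v ∉ D := by
          intro hv'
          exact (mem_filter.mp hv').2.1 rfl
        have hsub : insert v (C ∪ D) ⊆ A := by
          refine insert_subset hvA (union_subset (filter_subset _ _) (filter_subset _ _))
        have hle := card_le_card hsub
        rw [card_insert_of_notMem (by simp [hvC, hvD]), card_union_of_disjoint hdisj] at hle
        omega
      · intro x hxA hxv
        left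
        by_cases hpx : par x = v
        · rw [hpx]; exact mem_insert_self _ _
        · apply mem_insert_of_mem
          have hpA : par x ∈ A := hcl x hxA hxv
          have h1 : dep (par x) + 1 = dep x := hdep x hxv
          have h2 : dep (par (par x)) + 1 = dep (par x) := hdep _ hpx
          have hx2 : dep x ≤ 2 := le_trans (humax x hxA) hd
          have h3 : par (par x) = v := hzero _ (by omega)
          exact mem_filter.mpr ⟨hpA, hpx, h3, x, hxA, hxv, rfl⟩
    · push_neg at hd  -- 2 < dep u
      have huv : u ≠ v := by intro h; rw [h, hv] at hd; omega
      set p := par u with hp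
      have hpA : p ∈ A := hcl u huA huv
      have hdp : dep p + 1 = dep u := hdep u huv
      have hpv : p ≠ v := by intro h; rw [h, hv] at hdp; omega
      set g := par p with hg
      have hgA : g ∈ A := hcl p hpA hpv
      have hdg : dep g + 1 = dep p := hdep p hpv
      have hgv : g ≠ v := by intro h; rw [h, hv] at hdg; omega
      have hdg1 : 1 ≤ dep g := by
        rcases Nat.eq_zero_or_pos (dep g) with h0 | h0
        · exact absurd (hzero g h0) hgv
        · exact h0
      set B := A.filter (fun x => par^[dep x - dep g] x = g) with hB
      have hgB : g ∈ B := by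
        refine mem_filter.mpr ⟨hgA, ?_⟩
        rw [Nat.sub_self, Function.iterate_zero_apply]
      have hBlow : ∀ x ∈ B, dep g ≤ dep x := by
        intro x hx
        by_contra hlt
        push_neg at hlt
        have h0 : dep x - dep g = 0 := by omega
        have hx' := (mem_filter.mp hx).2
        rw [h0, Function.iterate_zero_apply] at hx'
        rw [hx'] at hlt
        omega
      have hvB : v ∉ B := by
        intro hvB'
        have := hBlow v hvB'
        omega
      have hBne_v : ∀ x ∈ B, x ≠ v := fun x hx hh => hvB (hh ▸ hx)
      have hgonly : ∀ x ∈ B, dep x = dep g → x = g := by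
        intro x hx hdx
        have hx' := (mem_filter.mp hx).2
        rwa [hdx, Nat.sub_self, Function.iterate_zero_apply] at hx'
      have hmem : ∀ x ∈ B, x ≠ g → par x ∈ B := by
        intro x hx hxg
        have hxA := (mem_filter.mp hx).1
        have hdx := hBlow x hx
        have hxv := hBne_v x hx
        have h1 : dep (par x) + 1 = dep x := hdep x hxv
        have hgt : dep g < dep x :=
          lt_of_le_of_ne hdx (fun hh => hxg (hgonly x hx hh.symm))
        have hk : dep x - dep g = (dep (par x) - dep g) + 1 := by omega
        have hx' := (mem_filter.mp hx).2
        rw [hk, Function.iterate_succ_apply] at hx'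
        exact mem_filter.mpr ⟨hcl x hxA hxv, hx'⟩
      have hup : ∀ x ∈ A, x ≠ v → par x ∈ B → x ∈ B := by
        intro x hxA hxv hpB
        have h1 : dep (par x) + 1 = dep x := hdep x hxv
        have h2 : dep g ≤ dep (par x) := hBlow _ hpB
        have hk : dep x - dep g = (dep (par x) - dep g) + 1 := by omega
        have hp' := (mem_filter.mp hpB).2
        refine mem_filter.mpr ⟨hxA, ?_⟩
        rw [hk, Function.iterate_succ_apply]
        exact hp'
      have hpB : p ∈ B := by
        refine mem_filter.mpr ⟨hpA, ?_⟩
        have hk : dep p - dep g = 1 := by omega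
        rw [hk, Function.iterate_one]
      have huB : u ∈ B := hup u huA huv (hp ▸ hpB)
      have hlayer : ∀ x ∈ B, x ≠ g → par x ≠ g → par (par x) = g := by
        intro x hx hxg hpxg
        have hpxB := hmem x hx hxg
        have hppxB := hmem _ hpxB hpxg
        have d1 := hdep x (hBne_v x hx)
        have d2 := hdep (par x) (hBne_v _ hpxB)
        have hxu : dep x ≤ dep u := humax x (mem_filter.mp hx).1
        have d3 := hBlow _ hppxB
        exact hgonly _ hppxB (by omega)
      set C := B.filter (fun c => par c = g ∧ ∃ s ∈ B, s ≠ v ∧ par s = c) with hCdef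
      have hpC : p ∈ C := mem_filter.mpr ⟨hpB, hg.symm, u, huB, huv, hp.symm⟩
      have hgC : g ∉ C := by
        intro hh
        have h1 := (mem_filter.mp hh).2.1
        have h2 := hdep g hgv
        rw [h1] at h2
        omega
      set A' := A \ B with hA'
      have hvA' : v ∈ A' := mem_sdiff.mpr ⟨hvA, hvB⟩
      have hclA' : ∀ x ∈ A', x ≠ v → par x ∈ A' := by
        intro x hx hxv
        obtain ⟨hxA, hxB⟩ := mem_sdiff.mp hx
        exact mem_sdiff.mpr ⟨hcl x hxA hxv, fun hpB' => hxB (hup x hxA hxv hpB')⟩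
      have hss : A' ⊂ A := by
        refine Finset.ssubset_iff_of_subset sdiff_subset |>.mpr ?_
        exact ⟨g, hgA, fun hh => (mem_sdiff.mp hh).2 hgB⟩
      obtain ⟨S', hS'sub, hvS', hS'card, hS'dom⟩ := ih A' hss hvA' hclA'
      refine ⟨S' ∪ insert g C, ?_, mem_union_left _ hvS', ?_, ?_⟩
      · apply union_subset (hS'sub.trans sdiff_subset)
        exact insert_subset hgA ((filter_subset _ _).trans (filter_subset _ _))
      · set D := B.filter (fun s => s ≠ v ∧ par s ∈ C) with hDdef
        have hCD : C.card ≤ D.card := by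
          have h1 : C ⊆ D.image par := by
            intro c hc
            have hc' := hc
            simp only [hCdef, mem_filter] at hc'
            obtain ⟨hcB, hcpar, s, hsB, hsv, hspar⟩ := hc'
            exact mem_image.mpr ⟨s, mem_filter.mpr ⟨hsB, hsv, hspar ▸ hc⟩, hspar⟩
          exact (card_le_card h1).trans card_image_le
        have hCDdisj : Disjoint C D := by
          rw [Finset.disjoint_left]
          intro c hcC hcD
          have h1 := (mem_filter.mp hcC).2.1
          have h2 := (mem_filter.mp hcD).2.2
          rw [h1] at h2
          exact hgC h2
        have hgD : g ∉ D := by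
          intro hh
          have h2 := (mem_filter.mp hh).2.2
          have h4 := hdep g hgv
          have h5 : dep g ≤ dep (par g) := by
            have := hBlow _ ((filter_subset _ _) h2)
            exact this
          omega
        have hBcard : 2 * C.card + 1 ≤ B.card := by
          have hsub : insert g (C ∪ D) ⊆ B := by
            refine insert_subset hgB (union_subset (filter_subset _ _) (filter_subset _ _))
          have hle := card_le_card hsub
          rw [card_insert_of_notMem (by simp [hgC, hgD]),
            card_union_of_disjoint hCDdisj] at hle
          omega
        have hBA : B ⊆ A := filter_subset _ _
        have hAcard : A.card = A'.card + B.card := by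
          rw [hA', card_sdiff_of_subset hBA]
          have := card_le_card hBA
          omega
        have hCne : 1 ≤ C.card := card_pos.mpr ⟨p, hpC⟩
        have hU : (S' ∪ insert g C).card ≤ S'.card + (1 + C.card) := by
          refine (card_union_le _ _).trans ?_
          have := card_insert_le g C
          omega
        omega
      · intro x hxA hxv
        by_cases hxB : x ∈ B
        · by_cases hxg : x = g
          · right
            exact ⟨p, mem_union_right _ (mem_insert_of_mem hpC), hpv, by rw [← hg, hxg]⟩
          · by_cases hpxg : par x = g
            · left; rw [hpxg]; exact mem_union_right _ (mem_insert_self _ _)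
            · left
              have hpxB := hmem x hxB hxg
              have hmemC : par x ∈ C :=
                mem_filter.mpr ⟨hpxB, hlayer x hxB hxg hpxg, x, hxB, hxv, rfl⟩
              exact mem_union_right _ (mem_insert_of_mem hmemC)
        · rcases hS'dom x (mem_sdiff.mpr ⟨hxA, hxB⟩) hxv with hh | ⟨s, hs, hsv, hsp⟩
          · left; exact mem_union_left _ hh
          · right; exact ⟨s, mem_union_left _ hs, hsv, hsp⟩

lemma exists_parent {V : Type*} (G : SimpleGraph V) (hG : G.Connected) (v : V) :
    ∃ par : V → V, ∀ x, x ≠ v → G.Adj x (par x) ∧ G.dist v (par x) + 1 = G.dist v x := by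
  classical
  have key : ∀ x, x ≠ v → ∃ y, G.Adj x y ∧ G.dist v y + 1 = G.dist v x := by
    intro x hx
    obtain ⟨p, hp⟩ := (hG v x).exists_walk_length_eq_dist
    have hpos : 0 < G.dist v x := by
      rcases Nat.eq_zero_or_pos (G.dist v x) with h0 | h0
      · rw [h0] at hp
        exact absurd (p.eq_of_length_eq_zero hp).symm hx
      · exact h0
    obtain ⟨q, hql⟩ : ∃ q : G.Walk x v, q.length = G.dist v x :=
      ⟨p.reverse, by rw [Walk.length_reverse, hp]⟩
    cases q with
    | nil => exact absurd rfl hx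
    | cons ha q' =>
      rename_i y
      refine ⟨y, ha, ?_⟩
      have h1 : G.dist v y ≤ q'.reverse.length := dist_le _
      have h2 : q'.reverse.length = q'.length := Walk.length_reverse _
      have h3 : q'.length + 1 = G.dist v x := by
        simpa using hql
      have h4 : G.dist v x ≤ G.dist v y + 1 := by
        have htri : G.dist v x ≤ G.dist v y + G.dist y x := hG.dist_triangle
        have hyx : G.dist y x ≤ 1 := by
          have := dist_le (Walk.cons ha.symm Walk.nil : G.Walk y x)
          simpa using this
        omega
      omega
  choose f hf using key
  exact ⟨fun x => if h : x = v then v else f x h, fun x hx => by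
    simpa [dif_neg hx] using hf x hx⟩

lemma exists_half {V : Type*} [Fintype V] [DecidableEq V] (f : V → ℕ) :
    ∃ S : Finset V, S.card = Fintype.card V / 2 ∧ 2 * ∑ x ∈ S, f x ≤ ∑ x, f x := by
  classical
  set n := Fintype.card V with hn
  have hpow : ((univ : Finset V).powersetCard (n / 2)).Nonempty := by
    rw [Finset.powersetCard_nonempty, card_univ]
    omega
  obtain ⟨S, hS, hmin⟩ := Finset.exists_min_image _ (fun T => ∑ x ∈ T, f x) hpow
  obtain ⟨hSsub, hScard⟩ := Finset.mem_powersetCard.mp hS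
  have hc : n / 2 ≤ Sᶜ.card := by
    rw [card_compl, hScard]
    omega
  obtain ⟨T, hTsub, hTcard⟩ := Finset.exists_subset_card_eq hc
  have h1 : ∑ x ∈ S, f x ≤ ∑ x ∈ T, f x :=
    hmin T (Finset.mem_powersetCard.mpr ⟨subset_univ _, hTcard⟩)
  have h2 : ∑ x ∈ T, f x ≤ ∑ x ∈ Sᶜ, f x :=
    sum_le_sum_of_subset hTsub
  have h3 := Finset.sum_add_sum_compl S f
  exact ⟨S, hScard, by omega⟩
lemma ann_ge_half {V : Type*} [Fintype V] (G : SimpleGraph V) :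
    Fintype.card V / 2 ≤ annihilationNumber G := by
  classical
  obtain ⟨S, hScard, hSsum⟩ := exists_half (fun x => G.degree x)
  have hdeg : ∀ x : V, (G.neighborSet x).ncard = G.degree x := by
    intro x
    rw [← Nat.card_coe_set_eq, Nat.card_eq_fintype_card, card_neighborSet_eq_degree]
  have hedge : G.edgeSet.ncard = G.edgeFinset.card := by
    rw [← Nat.card_coe_set_eq, Nat.card_eq_fintype_card, ← edgeFinset_card]
  have hhand : ∑ x, G.degree x = 2 * G.edgeFinset.card := G.sum_degrees_eq_twice_card_edges
  apply le_csSup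
  · refine ⟨Fintype.card V, ?_⟩
    rintro k ⟨T, hT, -⟩
    rw [← hT]
    exact card_le_univ T
  · refine ⟨S, hScard, ?_⟩
    calc ∑ v ∈ S, (G.neighborSet v).ncard = ∑ v ∈ S, G.degree v := by
          simp only [hdeg]
      _ ≤ G.edgeFinset.card := by omega
      _ = G.edgeSet.ncard := hedge.symm

end Aux

section UID

variable {V W : Type*} (G : SimpleGraph V) (v : V) (H : SimpleGraph W) (h : W)

lemma uid_adj_inl {x y : V} (hxy : G.Adj x y) :
    (uidGraph G v H h).Adj (Sum.inl x) (Sum.inl y) := by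
  rw [uidGraph, SimpleGraph.fromRel_adj]
  exact ⟨by simp [hxy.ne], Or.inl (Or.inl ⟨x, y, hxy, rfl, rfl⟩)⟩

lemma uid_adj_inr (huniv : ∀ w : W, w ≠ h → H.Adj h w) (w : {w : W // w ≠ h}) :
    (uidGraph G v H h).Adj (Sum.inl v) (Sum.inr w) := by
  rw [uidGraph, SimpleGraph.fromRel_adj]
  exact ⟨by simp, Or.inl (Or.inr (Or.inr ⟨w, huniv w w.2, rfl, rfl⟩))⟩

end UID

theorem stmt_11' {V W : Type*} [Fintype V] [Fintype W]
    (G : SimpleGraph V) (H : SimpleGraph W) (v : V) (h : W)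
    (hG : G.Connected) (hH : H.Connected)
    (huniv : ∀ w : W, w ≠ h → H.Adj h w)
    (hcard : ⌈(Fintype.card V : ℚ) / 3 + 2⌉₊ ≤ Fintype.card W) :
    totalDominationNumber (uidGraph G v H h) ≤ annihilationNumber (uidGraph G v H h) + 1 := by
  classical
  set U := uidGraph G v H h with hU
  set nG := Fintype.card V with hnG
  set nW := Fintype.card W with hnW
  -- basic cardinality facts
  have hceil : nG + 6 ≤ 3 * nW := by
    have h1 : ((nG : ℚ) / 3 + 2) ≤ (nW : ℚ) := by
      calc ((nG : ℚ) / 3 + 2) ≤ (⌈(nG : ℚ) / 3 + 2⌉₊ : ℚ) := Nat.le_ceil _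
        _ ≤ (nW : ℚ) := by exact_mod_cast hcard
    have h2 : ((nG : ℚ) + 6) ≤ 3 * (nW : ℚ) := by linarith
    exact_mod_cast h2
  have hsub : Fintype.card {w : W // w ≠ h} = nW - 1 := by
    rw [hnW]
    have := Fintype.card_subtype_compl (fun w : W => w = h)
    simpa [Fintype.card_subtype_eq] using this
  have hnG1 : 1 ≤ nG := by
    rw [hnG]
    exact Fintype.card_pos_iff.mpr ⟨v⟩
  have hN : Fintype.card (V ⊕ {w : W // w ≠ h}) = nG + (nW - 1) := by
    rw [Fintype.card_sum, hsub]
  -- a vertex in the H-part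
  have hw0 : Nonempty {w : W // w ≠ h} := by
    apply Fintype.card_pos_iff.mp
    omega
  obtain ⟨w0⟩ := hw0
  -- tree structure on G
  obtain ⟨par, hpar⟩ := exists_parent G hG v
  obtain ⟨S, hSsub, hvS, hScard, hSdom⟩ :=
    tree_lemma v par (G.dist v) (G.dist_self) (fun x hx => (hpar x hx).2)
      Finset.univ (Finset.mem_univ v) (fun x _ _ => Finset.mem_univ _)
  rw [Finset.card_univ, ← hnG] at hScard
  -- the total dominating set
  set D : Finset (V ⊕ {w : W // w ≠ h}) :=
    insert (Sum.inr w0) (S.image (Sum.inl : V → V ⊕ {w : W // w ≠ h})) with hD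
  have hdom : ∀ a : V ⊕ {w : W // w ≠ h}, ∃ u ∈ D, U.Adj a u := by
    intro a
    have hvD : Sum.inl v ∈ D :=
      Finset.mem_insert_of_mem (Finset.mem_image_of_mem _ hvS)
    rcases a with x | w
    · by_cases hxv : x = v
      · refine ⟨Sum.inr w0, Finset.mem_insert_self _ _, ?_⟩
        rw [hxv]
        exact uid_adj_inr G v H h huniv w0
      · rcases hSdom x (Finset.mem_univ x) hxv with hp | ⟨s, hsS, hsv, hsp⟩
        · refine ⟨Sum.inl (par x), Finset.mem_insert_of_mem (Finset.mem_image_of_mem _ hp), ?_⟩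
          exact uid_adj_inl G v H h (hpar x hxv).1
        · refine ⟨Sum.inl s, Finset.mem_insert_of_mem (Finset.mem_image_of_mem _ hsS), ?_⟩
          have := (hpar s hsv).1
          rw [hsp] at this
          exact uid_adj_inl G v H h this.symm
    · exact ⟨Sum.inl v, hvD, (uid_adj_inr G v H h huniv w).symm⟩
  have htot : totalDominationNumber U ≤ D.card := Nat.sInf_le ⟨D, hdom, rfl⟩
  have hDcard : D.card ≤ S.card + 1 := by
    refine (Finset.card_insert_le _ _).trans ?_
    have := Finset.card_image_le (s := S) (f := (Sum.inl : V → V ⊕ {w : W // w ≠ h}))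
    omega
  have hann : Fintype.card (V ⊕ {w : W // w ≠ h}) / 2 ≤ annihilationNumber U :=
    ann_ge_half U
  rw [hN] at hann
  omega

/-- Let `G` and `H` be connected graphs, where `H` has at least
`⌈n(G)/3 + 2⌉` vertices and a universal vertex `h`, and let `v ∈ V(G)`. Then
`γₜ(G_v ∗ H) ≤ a(G_v ∗ H) + 1`. -/
theorem stmt_11 {V W : Type*} [Fintype V] [Fintype W]
    (G : SimpleGraph V) (H : SimpleGraph W) (v : V) (h : W)
    (hG : G.Connected) (hH : H.Connected)
    (huniv : ∀ w : W, w ≠ h → H.Adj h w)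
    (hcard : ⌈(Fintype.card V : ℚ) / 3 + 2⌉₊ ≤ Fintype.card W) :
    totalDominationNumber (uidGraph G v H h) ≤ annihilationNumber (uidGraph G v H h) + 1 :=
  stmt_11' G H v h hG hH huniv hcard
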